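/- Let the chemical reaction network be strongly endotactic, let P ⊆ {1,…,d} be nonempty with R(P) ≠ ∅, and let w̄ = (w̄^{(1)},…,w̄^{(ℓ′)}) be an ordered orthonormal family of unit vectors supported on P. Then there exists a reaction r′ ∈ super_{ℓ′} such that either supp(c_out^{r′}) ⊄ P, or the finite sequence k ↦ ⟨w̄^{(k)}, π_P c^{r′}⟩, k = 1,…,ℓ′, is not identically zero and its first nonzero term is negative. -/

import Mathlib

open Real Filter Finset Set MeasureTheory
open scoped Classical

noncomputable section

/-- A chemical reaction network on `d` species with `m` reactions. -/
structure CRN (d m : ℕ) where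
  cin : Fin m → Fin d → ℕ
  cout : Fin m → Fin d → ℕ
  k : Fin m → ℝ
  k_pos : ∀ r, 0 < k r

namespace CRN

variable {d m : ℕ}

/-- The reaction vector `c^r = c_out^r - c_in^r`. -/
def cvec (N : CRN d m) (r : Fin m) : Fin d → ℝ := fun i => (N.cout r i : ℝ) - (N.cin r i : ℝ)

/-- Mass-action rate `λ_r`. -/
def lam (N : CRN d m) (r : Fin m) (x : Fin d → ℝ) : ℝ := N.k r * ∏ i, x i ^ (N.cin r i)

/-- Volume-normalized jump rate `Λ_r^{(v)}`. -/
def jump (N : CRN d m) (v : ℝ) (r : Fin m) (x : Fin d → ℝ) : ℝ :=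
  N.k r / v ^ (∑ i, N.cin r i) * ∏ i, ∏ l ∈ Finset.range (N.cin r i), (v * x i - (l : ℝ))

/-- Reactions whose input complex is `w`-maximal among all input complexes. -/
def Rw (N : CRN d m) (w : Fin d → ℝ) : Set (Fin m) :=
  {r | ∀ r', 0 ≤ ∑ i, w i * ((N.cin r i : ℝ) - (N.cin r' i : ℝ))}

/-- Strongly endotactic network. -/
def StronglyEndotactic (N : CRN d m) : Prop :=
  ∀ w : Fin d → ℝ, w ≠ 0 →
    (∃ r ∈ N.Rw w, ∑ i, w i * N.cvec r i < 0) ∧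
    ∀ r ∈ N.Rw w, ∑ i, w i * N.cvec r i ≤ 0

/-- A siphon. -/
def IsSiphon (N : CRN d m) (P : Finset (Fin d)) : Prop :=
  P.Nonempty ∧ ∀ r, (∃ i ∈ P, 0 < N.cout r i) → ∃ i ∈ P, 0 < N.cin r i

/-- Reactions with substrates only from `P`. -/
def RP (N : CRN d m) (P : Finset (Fin d)) : Set (Fin m) := {r | ∀ i ∉ P, N.cin r i = 0}

/-- Reactions of `R(P)` whose input complex is `w`-maximal within `R(P)`. -/
def RPw (N : CRN d m) (P : Finset (Fin d)) (w : Fin d → ℝ) : Set (Fin m) :=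
  {r | r ∈ N.RP P ∧ ∀ r' ∈ N.RP P, 0 ≤ ∑ i, w i * ((N.cin r i : ℝ) - (N.cin r' i : ℝ))}

/-- The products of reaction `r` lie in `P`. -/
def OutIn (N : CRN d m) (P : Finset (Fin d)) (r : Fin m) : Prop := ∀ i ∉ P, N.cout r i = 0

/-- `w`-dissipative reaction. -/
def Dissipative (N : CRN d m) (P : Finset (Fin d)) (w : Fin d → ℝ) (r : Fin m) : Prop :=
  ¬ N.OutIn P r ∨ ∑ i, w i * N.cvec r i < 0

/-- `w`-explosive reaction. -/
def Explosive (N : CRN d m) (P : Finset (Fin d)) (w : Fin d → ℝ) (r : Fin m) : Prop :=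
  N.OutIn P r ∧ 0 < ∑ i, w i * N.cvec r i

end CRN

/-- Chemical Lyapunov function `U(x) = d + 1 + ∑ x_i (log x_i - 1)`. -/
def U (n : ℕ) (x : Fin n → ℝ) : ℝ := n + 1 + ∑ i, x i * (Real.log (x i) - 1)

/-- Euclidean inner product. -/
def dot {n : ℕ} (a b : Fin n → ℝ) : ℝ := ∑ i, a i * b i

namespace CRN

variable {d m : ℕ}

/-- `h_r^{(v)}(x) = ⟨∇_r^{(v)} U(x), c^r⟩`. -/
def hrv (N : CRN d m) (P : Finset (Fin d)) (v : ℝ) (r : Fin m) (x : Fin d → ℝ) : ℝ :=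
  ∑ i, (if i ∈ P then Real.log (x i)
        else if N.cout r i ≠ 0 then Real.log (N.cvec r i / v) else 0) * N.cvec r i

/-- `Q_r^{(v)}(x) = (U(x + v⁻¹ c^r)/U(x))^v`. -/
def Qrv (N : CRN d m) (v : ℝ) (r : Fin m) (x : Fin d → ℝ) : ℝ :=
  (U d (fun i => x i + N.cvec r i / v) / U d x) ^ v

/-- `L_r^{(v)}(x) = U(x) (Q_r^{(v)}(x) - 1)`. -/
def Lrv (N : CRN d m) (v : ℝ) (r : Fin m) (x : Fin d → ℝ) : ℝ :=
  U d x * (N.Qrv v r x - 1)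

/-- The modified network `C_{u,P}`: outputs of reactions not in `R(P)_u` are restricted to `P`. -/
def modify (N : CRN d m) (P : Finset (Fin d)) (u : Fin d → ℝ) : CRN d m where
  cin := N.cin
  cout := fun r i => if i ∈ P ∨ r ∈ N.RPw P u then N.cout r i else 0
  k := N.k
  k_pos := N.k_pos

/-- The nested sets `super_k` of a frame. -/
def superN (N : CRN d m) (P : Finset (Fin d)) {L : ℕ} (wbar : Fin L → Fin d → ℝ) : ℕ → Set (Fin m)
  | 0 => N.RP P
  | (k+1) =>
    if h : k < L then
      {r | r ∈ N.superN P wbar k ∧ ∀ r' ∈ N.superN P wbar k,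
        0 ≤ ∑ i, wbar ⟨k, h⟩ i * ((N.cin r i : ℝ) - (N.cin r' i : ℝ))}
    else N.superN P wbar k

/-- Species reachable in `k` steps starting from reactions with no inputs. -/
def reachSet (N : CRN d m) : ℕ → Set (Fin d)
  | 0 => ∅
  | (k+1) => N.reachSet k ∪
      {i | ∃ r, 0 < N.cout r i ∧ ∀ l, 0 < N.cin r l → l ∈ N.reachSet k}

/-- The Lagrangian `L(λ, ξ)`. -/
def Lagr (N : CRN d m) (lamv : Fin m → ℝ) (ξ : Fin d → ℝ) : ℝ :=
  ⨆ θ : Fin d → ℝ, ((∑ i, θ i * ξ i) - ∑ r, lamv r * (Real.exp (∑ i, θ i * N.cvec r i) - 1))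

end CRN

/-- A frame: an ordered orthonormal family supported on `P`. -/
structure Frame (d : ℕ) (P : Finset (Fin d)) (dstar : ℕ) where
  w : Fin dstar → Fin d → ℝ
  ortho : ∀ k l, dot (w k) (w l) = if k = l then 1 else 0
  suppP : ∀ k, ∀ i ∉ P, w k i = 0

/-- A `(v',P)`-divergent volume-jet framed by `F` and adapted to the network `N`. -/
structure VolJet {d m : ℕ} (N : CRN d m) (P : Finset (Fin d)) {dstar : ℕ}
    (F : Frame d P dstar) (v' : ℝ → ℝ) where
  v : ℕ → ℝ
  θ : ℕ → ℝ
  w : ℕ → Fin d → ℝ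
  θ_gt : ∀ j, 1 < θ j
  θ_top : Tendsto θ atTop atTop
  conic : ∀ j, ∃ a : Fin dstar → ℝ, (∀ k, 0 ≤ a k) ∧ ∀ i, w j i = ∑ k, a k * F.w k i
  unit : ∀ j, dot (w j) (w j) = 1
  beta_ratio : ∀ (k : ℕ) (hk : k + 1 < dstar),
    Tendsto (fun j => dot (w j) (F.w ⟨k + 1, hk⟩) / dot (w j) (F.w ⟨k, Nat.lt_of_succ_lt hk⟩))
      atTop (nhds 0)
  adapted_sign : ∀ r ∈ N.RP P, N.OutIn P r →
    (∀ j, dot (w j) (N.cvec r) < 0) ∨ (∀ j, dot (w j) (N.cvec r) = 0) ∨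
      (∀ j, 0 < dot (w j) (N.cvec r))
  adapted_theta : ∀ k : Fin dstar,
    (∃ L : ℝ, Tendsto (fun j => θ j ^ dot (w j) (F.w k)) atTop (nhds L)) ∨
      Tendsto (fun j => θ j ^ dot (w j) (F.w k)) atTop atTop
  vx_nat : ∀ j, ∀ i ∈ P, ∃ n : ℕ, 0 < n ∧ v j * θ j ^ (w j i) = n
  v_big : ∀ j, v' (∑ i ∈ P, θ j ^ (w j i)) < v j
  x_div : Tendsto (fun j => ∑ i ∈ P, θ j ^ (w j i)) atTop atTop

/-- The spatial trajectory of a volume-jet. -/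
def VolJet.x {d m : ℕ} {N : CRN d m} {P : Finset (Fin d)} {dstar : ℕ} {F : Frame d P dstar}
    {v' : ℝ → ℝ} (J : VolJet N P F v') (j : ℕ) : Fin d → ℝ :=
  fun i => if i ∈ P then J.θ j ^ (J.w j i) else 0

/-- Reachability sets for a polynomial system. -/
def polyReach (d : ℕ) (Q : Fin d → MvPolynomial (Fin d) ℝ) : ℕ → Set (Fin d)
  | 0 => ∅
  | (k+1) => polyReach d Q k ∪
      {i | ∃ s : Fin d →₀ ℕ, 0 < MvPolynomial.coeff s (Q i) ∧ ∀ l, s l ≠ 0 → l ∈ polyReach d Q k}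


section AuxLemmas

lemma poly_nonneg (L : ℕ) (c : ℕ → ℝ)
    (h : ∀ δ > (0:ℝ), ∃ ε : ℝ, 0 < ε ∧ ε < δ ∧
      0 ≤ c 0 + ∑ j ∈ Finset.range L, ε^(j+1) * c (j+1)) :
    0 ≤ c 0 := by
  by_contra hc
  push_neg at hc
  set B : ℝ := ∑ j ∈ Finset.range L, |c (j+1)| with hB
  have hB0 : 0 ≤ B := Finset.sum_nonneg fun j _ => abs_nonneg _
  obtain ⟨ε, hε0, hεδ, hsum⟩ := h (min 1 ((-c 0)/(B+1)))
    (lt_min one_pos (div_pos (by linarith) (by linarith)))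
  have hε1 : ε ≤ 1 := le_of_lt (lt_of_lt_of_le hεδ (min_le_left _ _))
  have hbound : ∑ j ∈ Finset.range L, ε^(j+1) * c (j+1) ≤ ε * B := by
    rw [Finset.mul_sum]
    refine Finset.sum_le_sum fun j _ => ?_
    have h1 : ε^(j+1) * c (j+1) ≤ ε^(j+1) * |c (j+1)| :=
      mul_le_mul_of_nonneg_left (le_abs_self _) (by positivity)
    have h2 : ε^(j+1) ≤ ε := by
      calc ε^(j+1) ≤ ε^1 := pow_le_pow_of_le_one hε0.le hε1 (by omega)
      _ = ε := pow_one ε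
    nlinarith [abs_nonneg (c (j+1))]
  have hεB : ε * (B+1) < -c 0 := by
    have : ε < (-c 0)/(B+1) := lt_of_lt_of_le hεδ (min_le_right _ _)
    calc ε * (B+1) < ((-c 0)/(B+1)) * (B+1) :=
          mul_lt_mul_of_pos_right this (by linarith)
      _ = -c 0 := by field_simp
  nlinarith

lemma first_coeff_nonneg (L k0 : ℕ) (hk0 : k0 < L) (dd : ℕ → ℝ)
    (hd : ∀ j < k0, dd j = 0)
    (h : ∀ δ > (0:ℝ), ∃ ε : ℝ, 0 < ε ∧ ε < δ ∧
      0 ≤ ∑ k ∈ Finset.range L, ε^k * dd k) :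
    0 ≤ dd k0 := by
  obtain ⟨L', rfl⟩ : ∃ L', L = k0 + 1 + L' := ⟨L - (k0+1), by omega⟩
  apply poly_nonneg L' (fun j => dd (k0 + j))
  intro δ hδ
  obtain ⟨ε, hε0, hεδ, hsum⟩ := h δ hδ
  refine ⟨ε, hε0, hεδ, ?_⟩
  have key : ∑ k ∈ Finset.range (k0 + 1 + L'), ε^k * dd k
      = ε^k0 * (dd (k0 + 0) + ∑ j ∈ Finset.range L', ε^(j+1) * dd (k0 + (j+1))) := by
    rw [Finset.sum_range_add, Finset.sum_range_add]
    have h1 : ∑ k ∈ Finset.range k0, ε^k * dd k = 0 :=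
      Finset.sum_eq_zero fun j hj => by rw [hd j (Finset.mem_range.mp hj), mul_zero]
    rw [h1]
    simp only [Finset.sum_range_one, zero_add, Nat.add_zero]
    rw [mul_add, Finset.mul_sum]
    congr 1
    apply Finset.sum_congr rfl
    intro j hj
    have : k0 + 1 + j = k0 + (j+1) := by omega
    rw [this, pow_add]
    ring
  rw [key] at hsum
  exact nonneg_of_mul_nonneg_right hsum (pow_pos hε0 k0)

namespace CRN

variable {d m : ℕ}

lemma superN_succ_eq (N : CRN d m) (P : Finset (Fin d)) {L : ℕ} (wbar : Fin L → Fin d → ℝ)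
    {k : ℕ} (h : k < L) :
    N.superN P wbar (k+1) = {r | r ∈ N.superN P wbar k ∧ ∀ r' ∈ N.superN P wbar k,
        0 ≤ ∑ i, wbar ⟨k, h⟩ i * ((N.cin r i : ℝ) - (N.cin r' i : ℝ))} := by
  rw [superN, dif_pos h]

lemma superN_subset_RP (N : CRN d m) (P : Finset (Fin d)) {L : ℕ} (wbar : Fin L → Fin d → ℝ) :
    ∀ k, N.superN P wbar k ⊆ N.RP P := by
  intro k
  induction k with
  | zero => exact fun x hx => hx
  | succ k ih =>
    by_cases h : k < L
    · rw [superN_succ_eq N P wbar h]; exact fun x hx => ih hx.1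
    · rw [superN, dif_neg h]; exact ih

end CRN

/-- Coefficient `⟨wbar_k, c_in^r⟩` as a function of a natural index. -/
def Bc {d m : ℕ} (N : CRN d m) {L : ℕ} (wbar : Fin L → Fin d → ℝ) (k : ℕ) (r : Fin m) : ℝ :=
  if h : k < L then ∑ i, wbar ⟨k, h⟩ i * (N.cin r i : ℝ) else 0

/-- Coefficient `⟨wbar_k, c^r⟩` as a function of a natural index. -/
def Ac {d m : ℕ} (N : CRN d m) {L : ℕ} (wbar : Fin L → Fin d → ℝ) (k : ℕ) (r : Fin m) : ℝ :=
  if h : k < L then ∑ i, wbar ⟨k, h⟩ i * N.cvec r i else 0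

end AuxLemmas

theorem stmt11 {d m : ℕ} (ℓ' : ℕ) (hl : 0 < ℓ') (N : CRN d m)
    (hend : N.StronglyEndotactic)
    (P : Finset (Fin d)) (hP : P.Nonempty) (hRP : (N.RP P).Nonempty)
    (wbar : Fin ℓ' → Fin d → ℝ)
    (hortho : ∀ k l, dot (wbar k) (wbar l) = if k = l then 1 else 0)
    (hsupp : ∀ k, ∀ i ∉ P, wbar k i = 0) :
    ∃ r' ∈ N.superN P wbar ℓ',
      ¬ N.OutIn P r' ∨
      ∃ k : Fin ℓ', dot (wbar k) (N.cvec r') < 0 ∧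
        ∀ k' < k, dot (wbar k') (N.cvec r') = 0 := by
  classical
  obtain ⟨G, hG⟩ : ∃ G : ℝ, G = ∑ r : Fin m, ∑ k : Fin ℓ', ∑ i, |wbar k i| * (N.cin r i : ℝ) :=
    ⟨_, rfl⟩
  have hG0 : 0 ≤ G := by
    rw [hG]; positivity
  obtain ⟨M, hM⟩ : ∃ M : ℝ, M = 2*G + 1 := ⟨_, rfl⟩
  obtain ⟨w, hw⟩ : ∃ w : ℝ → Fin d → ℝ,
      w = fun ε i => (if i ∈ P then 0 else -M) + ∑ k : Fin ℓ', ε^(k:ℕ) * wbar k i := ⟨_, rfl⟩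
  -- expansion of inner products against `w ε`
  have hexp : ∀ (ε : ℝ) (u : Fin d → ℝ),
      ∑ i, w ε i * u i
        = (∑ i, (if i ∈ P then (0:ℝ) else -M) * u i)
          + ∑ k : Fin ℓ', ε^(k:ℕ) * ∑ i, wbar k i * u i := by
    intro ε u
    have hterm : ∀ i, w ε i * u i
        = (if i ∈ P then (0:ℝ) else -M) * u i + ∑ k : Fin ℓ', ε^(k:ℕ) * wbar k i * u i := by
      intro i
      rw [hw]
      simp only []
      rw [add_mul, Finset.sum_mul]
    rw [Finset.sum_congr rfl (fun i _ => hterm i), Finset.sum_add_distrib]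
    congr 1
    rw [Finset.sum_comm]
    refine Finset.sum_congr rfl fun k _ => ?_
    rw [Finset.mul_sum]
    exact Finset.sum_congr rfl fun i _ => by ring
  -- the `-M` part vanishes for reactions in `R(P)`
  have hA0 : ∀ r ∈ N.RP P, ∑ i, (if i ∈ P then (0:ℝ) else -M) * (N.cin r i : ℝ) = 0 := by
    intro r hr
    refine Finset.sum_eq_zero fun i _ => ?_
    by_cases hi : i ∈ P
    · simp [hi]
    · simp [hi, hr i hi]
  -- the `-M` part is very negative for reactions outside `R(P)`
  have hAneg : ∀ r, r ∉ N.RP P →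
      ∑ i, (if i ∈ P then (0:ℝ) else -M) * (N.cin r i : ℝ) ≤ -M := by
    intro r hr
    have : ¬ ∀ i ∉ P, N.cin r i = 0 := hr
    push_neg at this
    obtain ⟨i0, hi0, hne⟩ := this
    have hnonneg : ∀ i ∈ Finset.univ (α := Fin d),
        0 ≤ -((if i ∈ P then (0:ℝ) else -M) * (N.cin r i : ℝ)) := by
      intro i _
      by_cases hi : i ∈ P
      · simp [hi]
      · simp only [hi, if_false]
        have hMn : (0:ℝ) ≤ M := by rw [hM]; linarith
        have hcn : (0:ℝ) ≤ (N.cin r i : ℝ) := Nat.cast_nonneg _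
        nlinarith
    have hsingle := Finset.single_le_sum hnonneg (Finset.mem_univ i0)
    have hsum : ∑ i, -((if i ∈ P then (0:ℝ) else -M) * (N.cin r i : ℝ))
        = -∑ i, (if i ∈ P then (0:ℝ) else -M) * (N.cin r i : ℝ) := by
      rw [Finset.sum_neg_distrib]
    have hi0term : M ≤ -((if i0 ∈ P then (0:ℝ) else -M) * (N.cin r i0 : ℝ)) := by
      rw [if_neg hi0]
      have h1 : (1:ℝ) ≤ (N.cin r i0 : ℝ) := by
        exact_mod_cast Nat.one_le_iff_ne_zero.mpr hne
      have hMpos : (0:ℝ) ≤ M := by rw [hM]; linarith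
      nlinarith
    rw [hsum] at hsingle
    linarith
  -- the oscillating part is bounded by `G`
  have hEbound : ∀ ε : ℝ, 0 < ε → ε ≤ 1 → ∀ r,
      |∑ k : Fin ℓ', ε^(k:ℕ) * ∑ i, wbar k i * (N.cin r i : ℝ)| ≤ G := by
    intro ε hε hε1 r
    calc |∑ k : Fin ℓ', ε^(k:ℕ) * ∑ i, wbar k i * (N.cin r i : ℝ)|
        ≤ ∑ k : Fin ℓ', |ε^(k:ℕ) * ∑ i, wbar k i * (N.cin r i : ℝ)| :=
          Finset.abs_sum_le_sum_abs _ _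
      _ ≤ ∑ k : Fin ℓ', ∑ i, |wbar k i| * (N.cin r i : ℝ) := by
          refine Finset.sum_le_sum fun k _ => ?_
          rw [abs_mul]
          have h1 : |ε^(k:ℕ)| ≤ 1 := by
            rw [abs_of_pos (pow_pos hε _)]
            exact pow_le_one₀ hε.le hε1
          have h2 : |∑ i, wbar k i * (N.cin r i : ℝ)| ≤ ∑ i, |wbar k i| * (N.cin r i : ℝ) := by
            calc |∑ i, wbar k i * (N.cin r i : ℝ)|
                ≤ ∑ i, |wbar k i * (N.cin r i : ℝ)| := Finset.abs_sum_le_sum_abs _ _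
              _ = ∑ i, |wbar k i| * (N.cin r i : ℝ) := by
                  refine Finset.sum_congr rfl fun i _ => ?_
                  rw [abs_mul, Nat.abs_cast]
          calc |ε^(k:ℕ)| * |∑ i, wbar k i * (N.cin r i : ℝ)|
              ≤ 1 * |∑ i, wbar k i * (N.cin r i : ℝ)| :=
                mul_le_mul_of_nonneg_right h1 (abs_nonneg _)
            _ = |∑ i, wbar k i * (N.cin r i : ℝ)| := one_mul _
            _ ≤ ∑ i, |wbar k i| * (N.cin r i : ℝ) := h2
      _ ≤ G := by
          rw [hG]
          exact Finset.single_le_sum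
            (f := fun r' => ∑ k : Fin ℓ', ∑ i, |wbar k i| * (N.cin r' i : ℝ))
            (fun r' _ => by positivity) (Finset.mem_univ r)
  -- for each small ε there is a good maximal reaction
  have hGood : ∀ ε : ℝ, 0 < ε → ε ≤ 1 → ∃ r, r ∈ N.RP P ∧
      (∀ r' ∈ N.RP P, 0 ≤ ∑ k ∈ Finset.range ℓ', ε^k * (Bc N wbar k r - Bc N wbar k r')) ∧
      (N.OutIn P r → ∑ k ∈ Finset.range ℓ', ε^k * Ac N wbar k r < 0) := by
    intro ε hε hε1
    have hwne : w ε ≠ 0 := by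
      intro h0
      have h1 : ∑ i, w ε i * wbar ⟨0, hl⟩ i = 0 := by
        rw [h0]; simp
      rw [hexp ε (wbar ⟨0, hl⟩)] at h1
      have h2 : ∑ i, (if i ∈ P then (0:ℝ) else -M) * wbar ⟨0, hl⟩ i = 0 := by
        refine Finset.sum_eq_zero fun i _ => ?_
        by_cases hi : i ∈ P
        · simp [hi]
        · simp [hi, hsupp ⟨0, hl⟩ i hi]
      have h3 : ∀ k : Fin ℓ', ∑ i, wbar k i * wbar ⟨0, hl⟩ i
          = if k = ⟨0, hl⟩ then (1:ℝ) else 0 := fun k => hortho k ⟨0, hl⟩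
      have h4 : ∑ k : Fin ℓ', ε^(k:ℕ) * ∑ i, wbar k i * wbar ⟨0, hl⟩ i = 1 := by
        rw [Finset.sum_congr rfl (fun k _ => by rw [h3 k])]
        simp
      rw [h2, h4] at h1
      norm_num at h1
    obtain ⟨⟨r, hrRw, hrneg⟩, -⟩ := hend (w ε) hwne
    have hrRw' : ∀ r', ∑ i, w ε i * (N.cin r' i : ℝ) ≤ ∑ i, w ε i * (N.cin r i : ℝ) := by
      intro r'
      have h1 : (0:ℝ) ≤ ∑ i, w ε i * ((N.cin r i : ℝ) - (N.cin r' i : ℝ)) := hrRw r'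
      have h2 : ∑ i, w ε i * ((N.cin r i : ℝ) - (N.cin r' i : ℝ))
          = ∑ i, w ε i * (N.cin r i : ℝ) - ∑ i, w ε i * (N.cin r' i : ℝ) := by
        rw [← Finset.sum_sub_distrib]
        exact Finset.sum_congr rfl fun i _ => by ring
      rw [h2] at h1
      linarith
    have hrRP : r ∈ N.RP P := by
      by_contra hno
      obtain ⟨r0, hr0⟩ := hRP
      have h1 := hrRw' r0
      rw [hexp, hexp] at h1
      rw [hA0 r0 hr0] at h1
      have e1 := hAneg r hno
      obtain ⟨e2a, e2b⟩ := abs_le.mp (hEbound ε hε hε1 r)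
      obtain ⟨e3a, e3b⟩ := abs_le.mp (hEbound ε hε hε1 r0)
      linarith
    have hEq : ∀ r'' ∈ N.RP P, ∑ i, w ε i * (N.cin r'' i : ℝ)
        = ∑ k ∈ Finset.range ℓ', ε^k * Bc N wbar k r'' := by
      intro r'' hr''
      rw [hexp, hA0 r'' hr'', zero_add,
        ← Fin.sum_univ_eq_sum_range (fun k => ε^k * Bc N wbar k r'') ℓ']
      refine Finset.sum_congr rfl fun k _ => ?_
      congr 1
      simp [Bc]
    refine ⟨r, hrRP, ?_, ?_⟩
    · intro r' hr'
      have h1 := hrRw' r'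
      rw [hEq r hrRP, hEq r' hr'] at h1
      have h2 : ∑ k ∈ Finset.range ℓ', ε^k * (Bc N wbar k r - Bc N wbar k r')
          = (∑ k ∈ Finset.range ℓ', ε^k * Bc N wbar k r)
            - ∑ k ∈ Finset.range ℓ', ε^k * Bc N wbar k r' := by
        rw [← Finset.sum_sub_distrib]
        exact Finset.sum_congr rfl fun k _ => by ring
      rw [h2]
      linarith
    · intro hout
      have hcv : ∀ i ∉ P, N.cvec r i = 0 := by
        intro i hi
        simp [CRN.cvec, hrRP i hi, hout i hi]
      rw [hexp] at hrneg
      have h2 : ∑ i, (if i ∈ P then (0:ℝ) else -M) * N.cvec r i = 0 := by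
        refine Finset.sum_eq_zero fun i _ => ?_
        by_cases hi : i ∈ P
        · simp [hi]
        · simp [hcv i hi]
      rw [h2, zero_add] at hrneg
      have h3 : ∑ k : Fin ℓ', ε^(k:ℕ) * ∑ i, wbar k i * N.cvec r i
          = ∑ k ∈ Finset.range ℓ', ε^k * Ac N wbar k r := by
        rw [← Fin.sum_univ_eq_sum_range (fun k => ε^k * Ac N wbar k r) ℓ']
        refine Finset.sum_congr rfl fun k _ => ?_
        congr 1
        simp [Ac]
      rwa [h3] at hrneg
  -- pigeonhole over ε = 1/(n+1)
  have hhalf : ∀ n : ℕ, (0:ℝ) < 1/(n+1) ∧ (1:ℝ)/(n+1) ≤ 1 := by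
    intro n
    constructor
    · positivity
    · rw [div_le_one (by positivity)]
      have : (0:ℝ) ≤ (n:ℝ) := Nat.cast_nonneg n
      linarith
  choose f hf1 hf2 hf3 using fun n : ℕ => hGood (1/(n+1)) (hhalf n).1 (hhalf n).2
  obtain ⟨r, hrfib⟩ := Finite.exists_infinite_fiber f
  rw [Set.infinite_coe_iff] at hrfib
  have hrRP2 : r ∈ N.RP P := by
    obtain ⟨n, hn, -⟩ := hrfib.exists_gt 0
    have hfn : f n = r := hn
    rw [← hfn]
    exact hf1 n
  have hfr : ∀ δ : ℝ, 0 < δ → ∃ ε : ℝ, 0 < ε ∧ ε < δ ∧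
      (∀ r' ∈ N.RP P, 0 ≤ ∑ k ∈ Finset.range ℓ', ε^k * (Bc N wbar k r - Bc N wbar k r')) ∧
      (N.OutIn P r → ∑ k ∈ Finset.range ℓ', ε^k * Ac N wbar k r < 0) := by
    intro δ hδ
    obtain ⟨n0, hn0⟩ := exists_nat_gt (1/δ)
    obtain ⟨n, hn, hn0n⟩ := hrfib.exists_gt n0
    have hfn : f n = r := hn
    refine ⟨1/(n+1), (hhalf n).1, ?_, ?_, ?_⟩
    · rw [div_lt_iff₀ (by positivity)]
      have ha : 1/δ < (n:ℝ) := lt_trans hn0 (by exact_mod_cast hn0n)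
      rw [div_lt_iff₀ hδ] at ha
      nlinarith
    · rw [← hfn]; exact hf2 n
    · rw [← hfn]; exact hf3 n
  -- r is in every superN level
  have hmain : ∀ k, k ≤ ℓ' → r ∈ N.superN P wbar k ∧
      ∀ r' ∈ N.superN P wbar k, ∀ j, j < k → Bc N wbar j r' = Bc N wbar j r := by
    intro k
    induction k with
    | zero => exact fun _ => ⟨hrRP2, fun r' _ j hj => absurd hj (Nat.not_lt_zero j)⟩
    | succ k ih =>
      intro hk1
      have hk : k < ℓ' := hk1
      obtain ⟨hrk, hIH⟩ := ih (Nat.le_of_succ_le hk1)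
      have claim : ∀ r' ∈ N.superN P wbar k, 0 ≤ Bc N wbar k r - Bc N wbar k r' := by
        intro r' hr'
        have hr'RP : r' ∈ N.RP P := CRN.superN_subset_RP N P wbar k hr'
        apply first_coeff_nonneg ℓ' k hk (fun j => Bc N wbar j r - Bc N wbar j r')
        · intro j hj
          rw [hIH r' hr' j hj]
          ring
        · intro δ hδ
          obtain ⟨ε, hε0, hεδ, hB, -⟩ := hfr δ hδ
          exact ⟨ε, hε0, hεδ, hB r' hr'RP⟩
      have hdiff : ∀ x y : Fin m,
          ∑ i, wbar ⟨k, hk⟩ i * ((N.cin x i : ℝ) - (N.cin y i : ℝ))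
            = Bc N wbar k x - Bc N wbar k y := by
        intro x y
        simp only [Bc, dif_pos hk]
        rw [← Finset.sum_sub_distrib]
        exact Finset.sum_congr rfl fun i _ => by ring
      constructor
      · rw [CRN.superN_succ_eq N P wbar hk]
        refine ⟨hrk, fun r' hr' => ?_⟩
        rw [hdiff]
        exact claim r' hr'
      · intro r' hr' j hj
        rw [CRN.superN_succ_eq N P wbar hk] at hr'
        obtain ⟨hr'k, hr'max⟩ := hr'
        rcases Nat.lt_or_ge j k with h | h
        · exact hIH r' hr'k j h
        · have hjk : j = k := by omega
          subst hjk
          have h1 := hr'max r hrk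
          rw [hdiff] at h1
          have h2 := claim r' hr'k
          linarith
  have hrsup : r ∈ N.superN P wbar ℓ' := (hmain ℓ' le_rfl).1
  by_cases hout : N.OutIn P r
  · refine ⟨r, hrsup, Or.inr ?_⟩
    have hex : ∃ j, Ac N wbar j r ≠ 0 := by
      by_contra hall
      push_neg at hall
      obtain ⟨ε, hε0, -, -, hlt⟩ := hfr 1 one_pos
      have hz : ∑ k ∈ Finset.range ℓ', ε^k * Ac N wbar k r = 0 :=
        Finset.sum_eq_zero fun k _ => by rw [hall k, mul_zero]
      have := hlt hout
      rw [hz] at this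
      exact lt_irrefl 0 this
    have hk0spec : Ac N wbar (Nat.find hex) r ≠ 0 := Nat.find_spec hex
    have hk0min : ∀ j, j < Nat.find hex → Ac N wbar j r = 0 := by
      intro j hj
      by_contra h
      exact Nat.find_min hex hj h
    have hk0lt : Nat.find hex < ℓ' := by
      by_contra h
      push_neg at h
      exact hk0spec (dif_neg (not_lt.mpr h))
    have hle : 0 ≤ -(Ac N wbar (Nat.find hex) r) := by
      apply first_coeff_nonneg ℓ' (Nat.find hex) hk0lt (fun j => -(Ac N wbar j r))
      · intro j hj
        rw [hk0min j hj]
        ring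
      · intro δ hδ
        obtain ⟨ε, hε0, hεδ, -, hlt⟩ := hfr δ hδ
        refine ⟨ε, hε0, hεδ, ?_⟩
        have h1 := hlt hout
        have h2 : ∑ k ∈ Finset.range ℓ', ε^k * -(Ac N wbar k r)
            = -∑ k ∈ Finset.range ℓ', ε^k * Ac N wbar k r := by
          rw [← Finset.sum_neg_distrib]
          exact Finset.sum_congr rfl fun k _ => by ring
        rw [h2]
        linarith
    refine ⟨⟨Nat.find hex, hk0lt⟩, ?_, ?_⟩
    · have hd : dot (wbar ⟨Nat.find hex, hk0lt⟩) (N.cvec r) = Ac N wbar (Nat.find hex) r := by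
        have key : ∀ K (hK : K < ℓ'), dot (wbar ⟨K, hK⟩) (N.cvec r) = Ac N wbar K r := fun K hK => by
          unfold dot Ac
          rw [dif_pos hK]
        exact key _ hk0lt
      rw [hd]
      exact lt_of_le_of_ne (by linarith) hk0spec
    · intro k' hk'
      have hk'lt : (k' : ℕ) < Nat.find hex := hk'
      have hd : dot (wbar k') (N.cvec r) = Ac N wbar (k' : ℕ) r := by
        unfold dot Ac
        rw [dif_pos k'.isLt]
      rw [hd]
      exact hk0min _ hk'lt
  · exact ⟨r, hrsup, Or.inl hout⟩


end
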